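/- Let I be an uncountable set and let G be a non-Abelian group. Then the direct sum ⊕_{α∈I} G of copies of G does not embed into Homeo₊(ℝ), the group of orientation-preserving homeomorphisms of the real line. -/

import Mathlib

/-- The direct sum of a family of groups, as the subgroup of the product
consisting of finitely supported elements. -/
def directSum (I : Type*) (G : I → Type*) [∀ i, Group (G i)] :
    Subgroup (∀ i, G i) where
  carrier := {f | {i | f i ≠ 1}.Finite}
  one_mem' := by simp
  mul_mem' := by
    intro a b ha hb
    refine (Set.Finite.union ha hb).subset ?_
    intro i hi
    by_contra h
    simp only [Set.mem_setOf_eq, Set.mem_union, not_or, not_not] at h hi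
    exact hi (by show a i * b i = 1; rw [h.1, h.2, one_mul])
  inv_mem' := by
    intro a ha
    refine ha.subset ?_
    intro i hi
    simp only [Set.mem_setOf_eq] at hi ⊢
    intro h
    exact hi (by show (a i)⁻¹ = 1; rw [h, inv_one])

/-- The group of orientation-preserving homeomorphisms of the real line,
identified with the group of order-isomorphisms of `ℝ` (every order-isomorphism
of `ℝ` is automatically a homeomorphism, and conversely every
orientation-preserving homeomorphism is an order-isomorphism). -/
abbrev HomeoPlusR := ℝ ≃o ℝ

namespace S8

open Set

abbrev H := (ℝ ≃o ℝ)

lemma mulapp (f g : H) (x : ℝ) : (f * g) x = f (g x) := rfl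

lemma cont (f : H) : Continuous f := f.toHomeomorph.continuous

lemma commapp {f g : H} (h : Commute f g) (x : ℝ) : f (g x) = g (f x) := by
  have := h.eq
  calc f (g x) = (f * g) x := rfl
  _ = (g * f) x := by rw [this]
  _ = g (f x) := rfl

/-- The set of points with no fixed point of `f` between `p` and them. -/
def Jset (f : H) (p : ℝ) : Set ℝ := {x | ∀ y ∈ uIcc p x, f y ≠ y}

lemma mem_Jset_self {f : H} {p : ℝ} (hfp : f p ≠ p) : p ∈ Jset f p := by
  intro y hy
  rw [uIcc_self, mem_singleton_iff] at hy
  rw [hy]; exact hfp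

lemma Jset_star {f : H} {p x y : ℝ} (hx : x ∈ Jset f p) (hy : y ∈ uIcc p x) :
    y ∈ Jset f p := fun z hz => hx z (uIcc_subset_uIcc left_mem_uIcc hy hz)

lemma Jset_noFix {f : H} {p x : ℝ} (hx : x ∈ Jset f p) : f x ≠ x :=
  hx x right_mem_uIcc

lemma Jset_pos {f : H} {q x : ℝ} (hq : q < f q) (hx : x ∈ Jset f q) : x < f x := by
  rcases lt_trichotomy x (f x) with h | h | h
  · exact h
  · exact absurd h.symm (Jset_noFix hx)
  · exfalso
    have hcont : ContinuousOn (fun y => f y - y) (uIcc q x) :=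
      ((cont f).sub continuous_id).continuousOn
    have h0 : (0:ℝ) ∈ uIcc ((fun y => f y - y) q) ((fun y => f y - y) x) := by
      show (0:ℝ) ∈ uIcc (f q - q) (f x - x)
      exact mem_uIcc.2 (Or.inr ⟨by linarith, by linarith⟩)
    obtain ⟨z, hz, hz0⟩ := intermediate_value_uIcc hcont h0
    exact hx z hz (by simpa [sub_eq_zero] using hz0)

lemma Jset_map_mem {f : H} {q x : ℝ} (hq : q < f q) (hx : x ∈ Jset f q) :
    f x ∈ Jset f q := by
  intro z hz hfz
  have hfx : x < f x := Jset_pos hq hx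
  rcases mem_uIcc.1 hz with ⟨h1, h2⟩ | ⟨h1, h2⟩
  · rcases le_or_gt z x with h3 | h3
    · exact hx z (mem_uIcc.2 (Or.inl ⟨h1, h3⟩)) hfz
    · have : f x < f z := f.strictMono h3
      rw [hfz] at this; linarith
  · rcases le_or_gt x z with h3 | h3
    · exact hx z (mem_uIcc.2 (Or.inr ⟨h3, h2⟩)) hfz
    · have : f z < f x := f.strictMono h3
      rw [hfz] at this; linarith

lemma Jset_inv_mem {f : H} {q x : ℝ} (hq : q < f q) (hx : x ∈ Jset f q) :
    f⁻¹ x ∈ Jset f q := by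
  intro z hz hfz
  have hfx : x < f x := Jset_pos hq hx
  have hinv : f⁻¹ x < x := by
    have := f.symm.strictMono hfx
    rw [f.symm_apply_apply] at this; exact this
  have happ : f (f⁻¹ x) = x := f.apply_symm_apply x
  rcases mem_uIcc.1 hz with ⟨h1, h2⟩ | ⟨h1, h2⟩
  · exact hx z (mem_uIcc.2 (Or.inl ⟨h1, by linarith⟩)) hfz
  · rcases le_or_gt x z with h3 | h3
    · exact hx z (mem_uIcc.2 (Or.inr ⟨h3, h2⟩)) hfz
    · have : f (f⁻¹ x) ≤ f z := f.monotone h1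
      rw [happ, hfz] at this; linarith

lemma Jset_isOpen (f : H) (p : ℝ) : IsOpen (Jset f p) := by
  have hcl : IsClosed {y : ℝ | f y = y} := isClosed_eq (cont f) continuous_id
  rw [Metric.isOpen_iff]
  intro x hx
  have hxo : x ∈ {y : ℝ | f y = y}ᶜ := Jset_noFix hx
  obtain ⟨ε, hε, hball⟩ := Metric.isOpen_iff.1 hcl.isOpen_compl x hxo
  refine ⟨ε, hε, ?_⟩
  intro y hy
  intro z hz
  have : z ∈ uIcc p x ∪ uIcc x y := uIcc_subset_uIcc_union_uIcc hz
  rcases this with h | h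
  · exact hx z h
  · have : z ∈ Metric.ball x ε := by
      rw [Real.ball_eq_Ioo] at hy ⊢
      rw [mem_uIcc] at h
      constructor <;> [rcases h with ⟨a,b⟩|⟨a,b⟩ <;> cases' hy with c d <;> linarith;
        rcases h with ⟨a,b⟩|⟨a,b⟩ <;> cases' hy with c d <;> linarith]
    exact hball this

lemma exists_rat_gt_mem {U : Set ℝ} (hU : IsOpen U) {x : ℝ} (hx : x ∈ U) :
    ∃ r : ℚ, x < r ∧ (r:ℝ) ∈ U := by
  obtain ⟨ε, hε, hball⟩ := Metric.isOpen_iff.1 hU x hx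
  obtain ⟨r, hr1, hr2⟩ := exists_rat_btwn (lt_add_of_pos_right x (half_pos hε))
  refine ⟨r, hr1, hball ?_⟩
  rw [Real.ball_eq_Ioo]
  constructor <;> linarith

lemma Jset_trans {f : H} {p p' : ℝ} (hp' : p' ∈ Jset f p) :
    Jset f p' = Jset f p := by
  ext x
  constructor <;> intro hx z hz
  · rcases uIcc_subset_uIcc_union_uIcc (b := p') hz with h | h
    · exact hp' z h
    · exact hx z h
  · rcases uIcc_subset_uIcc_union_uIcc (b := p) hz with h | h
    · exact hp' z (by rwa [uIcc_comm] at h)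
    · exact hx z h

lemma Jset_map {f W : H} (hc : Commute f W) {p x : ℝ} (hx : x ∈ Jset f p) :
    W x ∈ Jset f (W p) := by
  intro z hz hfz
  have hz' : W⁻¹ z ∈ uIcc p x := by
    rcases mem_uIcc.1 hz with ⟨h1, h2⟩ | ⟨h1, h2⟩
    · have a1 : W⁻¹ (W p) ≤ W⁻¹ z := W.symm.monotone h1
      have a2 : W⁻¹ z ≤ W⁻¹ (W x) := W.symm.monotone h2
      simp only [show ∀ y, W⁻¹ (W y) = y from fun y => W.symm_apply_apply y] at a1 a2
      exact mem_uIcc.2 (Or.inl ⟨a1, a2⟩)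
    · have a1 : W⁻¹ (W x) ≤ W⁻¹ z := W.symm.monotone h1
      have a2 : W⁻¹ z ≤ W⁻¹ (W p) := W.symm.monotone h2
      simp only [show ∀ y, W⁻¹ (W y) = y from fun y => W.symm_apply_apply y] at a1 a2
      exact mem_uIcc.2 (Or.inr ⟨a1, a2⟩)
  refine hx _ hz' ?_
  have h1 : W (f (W⁻¹ z)) = f (W (W⁻¹ z)) := (commapp hc.symm _)
  have h1' : W (W⁻¹ z) = z := W.apply_symm_apply z
  rw [h1', hfz] at h1
  refine W.injective ?_
  rw [h1, h1']


lemma not_mem_Jset {f : H} {p x : ℝ} (hx : x ∉ Jset f p) :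
    ∃ z ∈ uIcc p x, f z = z := by
  by_contra hcon
  push_neg at hcon
  exact hx (fun y hy => hcon y hy)

lemma nest_aux {h₁ h₂ : H} {q x₁ x₂ : ℝ} (hc : Commute h₁ h₂)
    (hq1 : q < h₁ q) (hq2 : q < h₂ q)
    (hx1 : x₁ ∈ Jset h₁ q) (hx1n : x₁ ∉ Jset h₂ q)
    (hx2 : x₂ ∈ Jset h₂ q) (hx2n : x₂ ∉ Jset h₁ q)
    (hgt : q < x₁) (hlt : x₂ < q) : False := by
  obtain ⟨z₀, hz₀m, hz₀f⟩ := not_mem_Jset hx2n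
  rw [uIcc_of_ge hlt.le, mem_Icc] at hz₀m
  set K : Set ℝ := {z : ℝ | h₁ z = z} ∩ Icc x₂ q with hK
  have hKcl : IsClosed K := (isClosed_eq (cont h₁) continuous_id).inter isClosed_Icc
  have hKne : K.Nonempty := ⟨z₀, hz₀f, hz₀m.1, hz₀m.2⟩
  have hKbdd : BddAbove K := BddAbove.mono inter_subset_right bddAbove_Icc
  have huK : sSup K ∈ K := IsClosed.csSup_mem hKcl hKne hKbdd
  set u := sSup K with hu
  obtain ⟨huf, hux₂, huq⟩ : h₁ u = u ∧ x₂ ≤ u ∧ u ≤ q := ⟨huK.1, huK.2.1, huK.2.2⟩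
  have hmax : ∀ z', h₁ z' = z' → u < z' → z' ≤ q → False := by
    intro z' hf h1 h2
    have : z' ∈ K := ⟨hf, le_trans hux₂ h1.le, h2⟩
    exact absurd (le_csSup hKbdd this) (not_le.2 h1)
  have huJ2 : u ∈ Jset h₂ q := by
    intro z hz
    refine hx2 z ?_
    rw [uIcc_of_ge hlt.le, mem_Icc]
    rw [uIcc_of_ge huq, mem_Icc] at hz
    exact ⟨le_trans hux₂ hz.1, hz.2⟩
  have hu2 : u < h₂ u := Jset_pos hq2 huJ2
  have hu2J : h₂ u ∈ Jset h₂ q := Jset_map_mem hq2 huJ2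
  have hufix : h₁ (h₂ u) = h₂ u := by
    have := commapp hc u
    rw [huf] at this
    exact this
  rcases le_or_gt (h₂ u) q with hle | hgt2
  · exact hmax (h₂ u) hufix hu2 hle
  · rcases le_or_gt (h₂ u) x₁ with hle2 | hgt3
    · exact hx1 (h₂ u) (mem_uIcc.2 (Or.inl ⟨hgt2.le, hle2⟩)) hufix
    · exact hx1n (Jset_star hu2J (mem_uIcc.2 (Or.inl ⟨hgt.le, hgt3.le⟩)))

lemma nesting {h₁ h₂ : H} {q : ℝ} (hc : Commute h₁ h₂)
    (hq1 : q < h₁ q) (hq2 : q < h₂ q) :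
    Jset h₁ q ⊆ Jset h₂ q ∨ Jset h₂ q ⊆ Jset h₁ q := by
  by_contra hcon
  push_neg at hcon
  obtain ⟨x₁, hx1, hx1n⟩ := not_subset.1 hcon.1
  obtain ⟨x₂, hx2, hx2n⟩ := not_subset.1 hcon.2
  have hq1' : q ∈ Jset h₁ q := mem_Jset_self (ne_of_gt hq1)
  have hq2' : q ∈ Jset h₂ q := mem_Jset_self (ne_of_gt hq2)
  have hx1q : x₁ ≠ q := fun h => hx1n (h ▸ hq2')
  have hx2q : x₂ ≠ q := fun h => hx2n (h ▸ hq1')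
  rcases hx1q.lt_or_gt with h1 | h1 <;> rcases hx2q.lt_or_gt with h2 | h2
  · -- both < q
    rcases le_total x₁ x₂ with h3 | h3
    · exact hx2n (Jset_star hx1 (mem_uIcc.2 (Or.inr ⟨h3, h2.le⟩)))
    · exact hx1n (Jset_star hx2 (mem_uIcc.2 (Or.inr ⟨h3, h1.le⟩)))
  · exact nest_aux hc.symm hq2 hq1 hx2 hx2n hx1 hx1n h2 h1
  · exact nest_aux hc hq1 hq2 hx1 hx1n hx2 hx2n h1 h2
  · -- both > q
    rcases le_total x₁ x₂ with h3 | h3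
    · exact hx1n (Jset_star hx2 (mem_uIcc.2 (Or.inl ⟨h1.le, h3⟩)))
    · exact hx2n (Jset_star hx1 (mem_uIcc.2 (Or.inl ⟨h2.le, h3⟩)))

lemma jump {h₁ h₂ : H} {q x' : ℝ} (hc : Commute h₁ h₂)
    (hq1 : q < h₁ q) (hq2 : q < h₂ q)
    (hx' : x' ∈ Jset h₂ q) (hx'n : x' ∉ Jset h₁ q) :
    h₂ q ∉ Jset h₁ q := by
  have hq1' : q ∈ Jset h₁ q := mem_Jset_self (ne_of_gt hq1)
  have hx'q : x' ≠ q := fun h => hx'n (h ▸ hq1')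
  obtain ⟨z₀, hz₀m, hz₀f⟩ := not_mem_Jset hx'n
  rcases hx'q.lt_or_gt with hlt | hgt
  · -- x' < q : w := greatest h₁-fixed point in [x', q]
    rw [uIcc_of_ge hlt.le, mem_Icc] at hz₀m
    set K : Set ℝ := {z : ℝ | h₁ z = z} ∩ Icc x' q with hK
    have hKcl : IsClosed K := (isClosed_eq (cont h₁) continuous_id).inter isClosed_Icc
    have hKne : K.Nonempty := ⟨z₀, hz₀f, hz₀m.1, hz₀m.2⟩
    have hKbdd : BddAbove K := BddAbove.mono inter_subset_right bddAbove_Icc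
    have hwK : sSup K ∈ K := IsClosed.csSup_mem hKcl hKne hKbdd
    set w := sSup K with hwdef
    obtain ⟨hwf, hwx, hwq⟩ : h₁ w = w ∧ x' ≤ w ∧ w ≤ q := ⟨hwK.1, hwK.2.1, hwK.2.2⟩
    have hmax : ∀ z', h₁ z' = z' → w < z' → z' ≤ q → False := by
      intro z' hf hza h2
      exact absurd (le_csSup hKbdd (⟨hf, le_trans hwx hza.le, h2⟩ : z' ∈ K)) (not_le.2 hza)
    have hwJ2 : w ∈ Jset h₂ q := by
      intro z hz
      refine hx' z ?_
      rw [uIcc_of_ge hlt.le, mem_Icc]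
      rw [uIcc_of_ge hwq, mem_Icc] at hz
      exact ⟨le_trans hwx hz.1, hz.2⟩
    have hw2 : w < h₂ w := Jset_pos hq2 hwJ2
    have hwfix : h₁ (h₂ w) = h₂ w := by
      have := commapp hc w; rw [hwf] at this; exact this
    rcases le_or_gt (h₂ w) q with hle | hgt2
    · exact absurd (hmax (h₂ w) hwfix hw2 hle) (fun h => h)
    · have hwlt : w < q := lt_of_le_of_ne hwq (fun h => (ne_of_gt hq1) (h ▸ hwf))
      have : h₂ w < h₂ q := h₂.strictMono hwlt
      intro hmem
      exact hmem (h₂ w) (mem_uIcc.2 (Or.inl ⟨hgt2.le, this.le⟩)) hwfix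
  · -- x' > q : w := least h₁-fixed point in [q, x']
    rw [uIcc_of_le hgt.le, mem_Icc] at hz₀m
    set K : Set ℝ := {z : ℝ | h₁ z = z} ∩ Icc q x' with hK
    have hKcl : IsClosed K := (isClosed_eq (cont h₁) continuous_id).inter isClosed_Icc
    have hKne : K.Nonempty := ⟨z₀, hz₀f, hz₀m.1, hz₀m.2⟩
    have hKbdd : BddBelow K := BddBelow.mono inter_subset_right bddBelow_Icc
    have hwK : sInf K ∈ K := IsClosed.csInf_mem hKcl hKne hKbdd
    set w := sInf K with hwdef
    obtain ⟨hwf, hwq, hwx⟩ : h₁ w = w ∧ q ≤ w ∧ w ≤ x' := ⟨hwK.1, hwK.2.1, hwK.2.2⟩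
    have hmin : ∀ z', h₁ z' = z' → q ≤ z' → z' < w → False := by
      intro z' hf h1 h2
      exact absurd (csInf_le hKbdd (⟨hf, h1, le_trans h2.le hwx⟩ : z' ∈ K)) (not_le.2 h2)
    have hwJ2 : w ∈ Jset h₂ q := by
      intro z hz
      refine hx' z ?_
      rw [uIcc_of_le hgt.le, mem_Icc]
      rw [uIcc_of_le hwq, mem_Icc] at hz
      exact ⟨hz.1, le_trans hz.2 hwx⟩
    have hw2 : w < h₂ w := Jset_pos hq2 hwJ2
    have hw2' : h₂⁻¹ w < w := by
      have := h₂.symm.strictMono hw2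
      rw [h₂.symm_apply_apply] at this
      exact this
    have hwfix : h₁ (h₂⁻¹ w) = h₂⁻¹ w := by
      have := commapp hc.inv_right w; rw [hwf] at this; exact this
    rcases le_or_gt q (h₂⁻¹ w) with hle | hgt2
    · exact absurd (hmin (h₂⁻¹ w) hwfix hle hw2') (fun h => h)
    · have : w < h₂ q := by
        have h2' : h₂ (h₂⁻¹ w) = w := h₂.apply_symm_apply w
        have := h₂.strictMono hgt2
        rw [h2'] at this
        exact this
      intro hmem
      exact hmem w (mem_uIcc.2 (Or.inl ⟨hwq, this.le⟩)) hwf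


lemma pow_apply_succ (T : H) (m : ℕ) (x : ℝ) : (T^(m+1)) x = T ((T^m) x) := by
  rw [pow_succ']; rfl

lemma zpow_apply_add_one (T : H) (m : ℤ) (x : ℝ) : (T^(m+1)) x = T ((T^m) x) := by
  rw [add_comm, zpow_one_add]; rfl

lemma zpow_apply_sub_one (T : H) (m : ℤ) (x : ℝ) : (T^(m-1)) x = T⁻¹ ((T^m) x) := by
  rw [show m - 1 = -1 + m by ring, zpow_add, zpow_neg_one]; rfl

lemma orbit_up {T : H} {q : ℝ} (hq : q < T q) {x : ℝ} (hx : x ∈ Jset T q) :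
    ∃ m : ℕ, x < (T^m) q := by
  by_contra hcon
  push_neg at hcon
  set a : ℕ → ℝ := fun m => (T^m) q with ha
  have ha0 : a 0 = q := by simp [ha]
  have hmem : ∀ m, a m ∈ Jset T q := by
    intro m
    induction m with
    | zero => rw [ha0]; exact mem_Jset_self (ne_of_gt hq)
    | succ k ih =>
      have h1 : a (k+1) = T (a k) := pow_apply_succ T k q
      rw [h1]; exact Jset_map_mem hq ih
  have hmono : StrictMono a := strictMono_nat_of_lt_succ (fun m => by
    have h1 : a (m+1) = T (a m) := pow_apply_succ T m q
    rw [h1]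
    exact Jset_pos hq (hmem m))
  have hbdd : BddAbove (Set.range a) := ⟨x, by rintro _ ⟨m, rfl⟩; exact hcon m⟩
  have htend := tendsto_atTop_ciSup hmono.monotone hbdd
  set L := ⨆ m, a m with hL
  have htend2 : Filter.Tendsto (fun m => a (m+1)) Filter.atTop (nhds L) :=
    htend.comp (Filter.tendsto_add_atTop_nat 1)
  have htend3 : Filter.Tendsto (fun m => T (a m)) Filter.atTop (nhds (T L)) :=
    ((cont T).tendsto L).comp htend
  have hfun : (fun m => a (m+1)) = (fun m => T (a m)) :=
    funext (fun m => pow_apply_succ T m q)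
  rw [hfun] at htend2
  have hTL : T L = L := tendsto_nhds_unique htend3 htend2
  have hqL : q ≤ L := ha0 ▸ le_ciSup hbdd 0
  have hLx : L ≤ x := ciSup_le hcon
  exact Jset_noFix (Jset_star hx (mem_uIcc.2 (Or.inl ⟨hqL, hLx⟩))) hTL

lemma orbit_down {T : H} {q : ℝ} (hq : q < T q) {x : ℝ} (hx : x ∈ Jset T q) :
    ∃ m : ℕ, (T⁻¹^m) q ≤ x := by
  rcases le_or_gt q x with h | h
  · exact ⟨0, by simpa using h⟩
  by_contra hcon
  push_neg at hcon
  set a : ℕ → ℝ := fun m => (T⁻¹^m) q with ha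
  have ha0 : a 0 = q := by simp [ha]
  have hsucc : ∀ k, a (k+1) = T⁻¹ (a k) := fun k => pow_apply_succ T⁻¹ k q
  have hmem : ∀ m, a m ∈ Jset T q := by
    intro m
    induction m with
    | zero => rw [ha0]; exact mem_Jset_self (ne_of_gt hq)
    | succ k ih => rw [hsucc k]; exact Jset_inv_mem hq ih
  have hanti : StrictAnti a := strictAnti_nat_of_succ_lt (fun m => by
    rw [hsucc m]
    have h1 : a m < T (a m) := Jset_pos hq (hmem m)
    have h2 := T.symm.strictMono h1
    rw [T.symm_apply_apply] at h2
    exact h2)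
  have hbdd : BddBelow (Set.range a) := ⟨x, by rintro _ ⟨m, rfl⟩; exact (hcon m).le⟩
  have htend := tendsto_atTop_ciInf hanti.antitone hbdd
  set L := ⨅ m, a m with hL
  have htend2 : Filter.Tendsto (fun m => a (m+1)) Filter.atTop (nhds L) :=
    htend.comp (Filter.tendsto_add_atTop_nat 1)
  have htend3 : Filter.Tendsto (fun m => T⁻¹ (a m)) Filter.atTop (nhds (T⁻¹ L)) :=
    ((cont T⁻¹).tendsto L).comp htend
  have hfun : (fun m => a (m+1)) = (fun m => T⁻¹ (a m)) := funext hsucc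
  rw [hfun] at htend2
  have hTL' : T⁻¹ L = L := tendsto_nhds_unique htend3 htend2
  have hTL : T L = L := by
    have h4 : T (T⁻¹ L) = L := T.apply_symm_apply L
    calc T L = T (T⁻¹ L) := (congrArg T hTL').symm
    _ = L := h4
  have hxL : x ≤ L := le_ciInf (fun m => (hcon m).le)
  have hLq : L ≤ q := ha0 ▸ ciInf_le hbdd 0
  exact Jset_noFix (Jset_star hx (mem_uIcc.2 (Or.inr ⟨hxL, hLq⟩))) hTL

lemma zpow_mem {T : H} {q : ℝ} (hq : q < T q) (m : ℤ) : (T^m) q ∈ Jset T q := by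
  induction m using Int.induction_on with
  | zero => simpa using mem_Jset_self (ne_of_gt hq)
  | succ k ih =>
    rw [zpow_apply_add_one]
    exact Jset_map_mem hq ih
  | pred k ih =>
    rw [show (-(k:ℤ) - 1) = (-(k:ℤ)) - 1 by ring, zpow_apply_sub_one]
    exact Jset_inv_mem hq ih

lemma zpow_strict {T : H} {q : ℝ} (hq : q < T q) :
    StrictMono (fun m : ℤ => (T^m) q) := by
  apply strictMono_int_of_lt_succ
  intro m
  show (T^m) q < (T^(m+1)) q
  rw [zpow_apply_add_one]
  exact Jset_pos hq (zpow_mem hq m)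

lemma sandwich {T : H} {q : ℝ} (hq : q < T q) {x : ℝ} (hx : x ∈ Jset T q) :
    ∃ a : ℤ, (T^a) q ≤ x ∧ x < (T^(a+1)) q := by
  obtain ⟨m₁, hm₁⟩ := orbit_up hq hx
  obtain ⟨m₀, hm₀⟩ := orbit_down hq hx
  have hm₀' : (T^(-(m₀:ℤ))) q ≤ x := by
    rw [zpow_neg, ← inv_zpow, zpow_natCast]; exact hm₀
  have hm₁' : x < (T^((m₁:ℤ))) q := by rw [zpow_natCast]; exact hm₁
  by_contra hcon
  push_neg at hcon
  have H : ∀ N : ℕ, (T^(-(m₀:ℤ) + N)) q ≤ x := by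
    intro N
    induction N with
    | zero => simpa using hm₀'
    | succ k ih =>
      have h5 := hcon _ ih
      have h6 : -(m₀:ℤ) + (↑(k+1)) = (-(m₀:ℤ) + k) + 1 := by push_cast; ring
      rw [h6]
      exact h5
  have h7 := H (m₁ + m₀)
  have h8 : -(m₀:ℤ) + (↑(m₁ + m₀)) = (m₁:ℤ) := by push_cast; ring
  rw [h8] at h7
  exact absurd h7 (not_le.2 hm₁')


section GroupPart
variable {Γ : Type*} [Group Γ]

/-- commutator -/
def cmt (x y : Γ) : Γ := x * y * x⁻¹ * y⁻¹

lemma cmt_eq_one {x y : Γ} (h : Commute x y) : cmt x y = 1 := by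
  unfold cmt
  rw [h.eq]
  group

lemma cmt_one_one : cmt (1 : Γ) 1 = 1 := by unfold cmt; group

lemma cmt_mul_mul {a₁ a₂ b₁ b₂ : Γ} (h21 : Commute a₂ b₁) (h12 : Commute a₁ a₂)
    (h1b2 : Commute a₁ b₂) (hb12 : Commute b₁ b₂) :
    cmt (a₁ * a₂) (b₁ * b₂) = cmt a₁ b₁ * cmt a₂ b₂ := by
  have hX : (a₁ * a₂) * (b₁ * b₂) = (a₁ * b₁) * (a₂ * b₂) := h21.mul_mul_mul_comm a₁ b₂
  have hY : (a₁ * a₂)⁻¹ * (b₁ * b₂)⁻¹ = (a₂⁻¹ * b₂⁻¹) * (a₁⁻¹ * b₁⁻¹) := by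
    rw [mul_inv_rev, mul_inv_rev]
    exact (h1b2.inv_left.inv_right).mul_mul_mul_comm a₂⁻¹ b₁⁻¹
  have c1 : Commute a₁ (cmt a₂ b₂) := by
    unfold cmt
    exact ((h12.mul_right h1b2).mul_right (h12.inv_right)).mul_right (h1b2.inv_right)
  have c2 : Commute b₁ (cmt a₂ b₂) := by
    unfold cmt
    exact (((h21.symm).mul_right hb12).mul_right ((h21.symm).inv_right)).mul_right (hb12.inv_right)
  have hK : Commute (cmt a₂ b₂) (a₁⁻¹ * b₁⁻¹) :=
    (c1.symm.inv_right).mul_right (c2.symm.inv_right)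
  calc cmt (a₁*a₂) (b₁*b₂)
      = ((a₁*a₂) * (b₁*b₂)) * ((a₁*a₂)⁻¹ * (b₁*b₂)⁻¹) := by
        unfold cmt; rw [mul_assoc ((a₁*a₂) * (b₁*b₂))]
    _ = ((a₁*b₁) * (a₂*b₂)) * ((a₂⁻¹*b₂⁻¹) * (a₁⁻¹*b₁⁻¹)) := by rw [hX, hY]
    _ = (a₁*b₁) * (cmt a₂ b₂ * (a₁⁻¹*b₁⁻¹)) := by
        unfold cmt; simp only [mul_assoc]
    _ = (a₁*b₁) * ((a₁⁻¹*b₁⁻¹) * cmt a₂ b₂) := by rw [hK.eq]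
    _ = cmt a₁ b₁ * cmt a₂ b₂ := by
        unfold cmt; simp only [mul_assoc]

end GroupPart

section CountPart

lemma exists_uncountable_fiber {A B : Type*} [Countable B] {s : Set A}
    (hs : ¬ s.Countable) (f : A → B) : ∃ b, ¬ {a | a ∈ s ∧ f a = b}.Countable := by
  by_contra hcon
  push_neg at hcon
  apply hs
  have h1 : s = ⋃ b : B, {a | a ∈ s ∧ f a = b} := by
    ext x
    simp only [Set.mem_iUnion, Set.mem_setOf_eq]
    exact ⟨fun hx => ⟨f x, hx, rfl⟩, fun ⟨b, hb, _⟩ => hb⟩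
  rw [h1]
  exact Set.countable_iUnion hcon

lemma uncountable_nonempty {A : Type*} {s : Set A} (hs : ¬ s.Countable) : s.Nonempty := by
  by_contra h
  rw [Set.not_nonempty_iff_eq_empty] at h
  exact hs (h ▸ Set.countable_empty)

lemma uncountable_diff {A : Type*} {s : Set A} (hs : ¬ s.Countable) (x : A) :
    ¬ (s \ {x} : Set A).Countable := by
  intro h
  exact hs ((h.union (Set.countable_singleton x)).mono (fun y hy => by
    by_cases hxy : y = x
    · exact Set.mem_union_right _ (hxy ▸ Set.mem_singleton x)
    · exact Set.mem_union_left _ ⟨hy, hxy⟩))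

lemma uncountable_infinite {A : Type*} {s : Set A} (hs : ¬ s.Countable) : s.Infinite :=
  fun h => hs h.countable

end CountPart

lemma exists_rat_moved {f : H} (hf : f ≠ 1) : ∃ q : ℚ, f q ≠ q := by
  by_contra hcon
  push_neg at hcon
  apply hf
  have hfix : ∀ x : ℝ, f x = x := by
    intro x
    rcases lt_trichotomy (f x) x with h | h | h
    · obtain ⟨r, hr1, hr2⟩ := exists_rat_btwn h
      have := f.strictMono hr2
      rw [hcon r] at this
      linarith
    · exact h
    · obtain ⟨r, hr1, hr2⟩ := exists_rat_btwn h
      have := f.strictMono (show x < (r:ℝ) by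
        by_contra hco
        push_neg at hco
        have := f.monotone hco
        rw [hcon r] at this
        linarith)
      rw [hcon r] at this
      linarith
  exact DFunLike.ext f 1 hfix

lemma exists_tag {f : H} {q : ℝ} (hq : q < f q) :
    ∃ r : ℚ, (r:ℝ) ∈ Jset f q ∧ f q < r := by
  have h1 : f q ∈ Jset f q := Jset_map_mem hq (mem_Jset_self (ne_of_gt hq))
  obtain ⟨r, hr1, hr2⟩ := exists_rat_gt_mem (Jset_isOpen f q) h1
  exact ⟨r, hr2, hr1⟩


lemma inv_le_of_le {f : H} {x y : ℝ} (h : x ≤ f y) : f⁻¹ x ≤ y := by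
  have h2 := f.symm.monotone h
  rw [f.symm_apply_apply] at h2
  exact h2

lemma prodC (L : List H) (w : H) (h : ∀ u ∈ L, Commute u w) : Commute L.prod w := by
  induction L with
  | nil => simpa using Commute.one_left w
  | cons x xs ih =>
    rw [List.prod_cons]
    exact (h x List.mem_cons_self).mul_left (ih (fun u hu => h u (List.mem_cons_of_mem x hu)))

end S8

open S8 Set in
theorem stmt_8 {I : Type*} [Uncountable I] (G : Type*) [Group G]
    (hna : ∃ a b : G, a * b ≠ b * a) :
    ¬ ∃ φ : directSum I (fun _ : I => G) →* HomeoPlusR, Function.Injective φ := by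
  classical
  rintro ⟨φ, hφ⟩
  obtain ⟨a, b, hab⟩ := hna
  have hsingle : ∀ (α : I) (g : G),
      (MonoidHom.mulSingle (f := fun _ : I => G) α) g ∈ directSum I (fun _ : I => G) := by
    intro α g
    have hfin : {i | Pi.mulSingle (M := fun _ : I => G) α g i ≠ 1}.Finite := by
      refine Set.Finite.subset (Set.finite_singleton α) ?_
      intro i hi
      simp only [Set.mem_setOf_eq] at hi
      by_contra hne
      simp only [Set.mem_singleton_iff] at hne
      exact hi (Pi.mulSingle_eq_of_ne (M := fun _ : I => G) hne g)
    exact hfin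
  set ψ : I → (G →* S8.H) := fun α =>
    φ.comp ((MonoidHom.mulSingle (f := fun _ : I => G) α).codRestrict
      (directSum I (fun _ : I => G)) (hsingle α)) with hψdef
  have hψne : ∀ α (g : G), g ≠ 1 → ψ α g ≠ 1 := by
    intro α g hg h1
    apply hg
    have h0 : φ (((MonoidHom.mulSingle (f := fun _ : I => G) α).codRestrict
        (directSum I (fun _ : I => G)) (hsingle α)) g) = φ 1 := by
      rw [map_one]; exact h1
    have h2 := hφ h0
    have h3 := congrArg Subtype.val h2
    have h4 := congrFun h3 α
    simpa using h4
  have hψcomm : ∀ {α β : I}, α ≠ β → ∀ (g g' : G), Commute (ψ α g) (ψ β g') := by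
    intro α β hne g g'
    have h2 : Commute (Pi.mulSingle (M := fun _ : I => G) α g)
        (Pi.mulSingle (M := fun _ : I => G) β g') :=
      Pi.mulSingle_commute (f := fun _ : I => G) hne g g'
    have h1 : Commute (((MonoidHom.mulSingle (f := fun _ : I => G) α).codRestrict
        (directSum I (fun _ : I => G)) (hsingle α)) g)
        (((MonoidHom.mulSingle (f := fun _ : I => G) β).codRestrict
        (directSum I (fun _ : I => G)) (hsingle β)) g') := Subtype.ext h2.eq
    exact h1.map φ
  set c : G := a * b * a⁻¹ * b⁻¹ with hcdef
  have hcne : c ≠ 1 := by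
    intro h
    apply hab
    calc a*b = (a * b * a⁻¹ * b⁻¹) * (b*a) := by group
    _ = 1 * (b*a) := by rw [← hcdef, h]
    _ = b*a := one_mul _
  have huniv : ¬ (Set.univ : Set I).Countable := by
    intro h
    rw [Set.countable_univ_iff] at h
    exact not_countable h
  have hmoved : ∀ α : I, ∃ q : ℚ, (ψ α c) q ≠ q := fun α =>
    exists_rat_moved (hψne α c hcne)
  obtain ⟨q₀, hS₂unc⟩ := exists_uncountable_fiber huniv (fun α => Classical.choose (hmoved α))
  set S₂ : Set I := {α | α ∈ Set.univ ∧ Classical.choose (hmoved α) = q₀} with hS₂def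
  set q : ℝ := (q₀ : ℝ) with hqdef
  have hS₂q : ∀ α ∈ S₂, (ψ α c) q ≠ q := by
    intro α hα
    have h1 := Classical.choose_spec (hmoved α)
    rw [hα.2] at h1
    exact h1
  set xg : I → G := fun α => if q < (ψ α c) q then a else b with hxg
  set yg : I → G := fun α => if q < (ψ α c) q then b else a with hyg
  set F : I → S8.H := fun α => ψ α (xg α) with hF
  set Gm : I → S8.H := fun α => ψ α (yg α) with hGm
  set hh : I → S8.H := fun α => S8.cmt (F α) (Gm α) with hhh
  have hh_eq : ∀ α, hh α = ψ α (S8.cmt (xg α) (yg α)) := by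
    intro α
    simp only [hhh, hF, hGm, S8.cmt, map_mul, map_inv]
  have hhpos : ∀ α ∈ S₂, q < hh α q := by
    intro α hα
    by_cases hc1 : q < (ψ α c) q
    · have he : hh α = ψ α c := by
        rw [hh_eq α]
        congr 1
        simp only [hxg, hyg, if_pos hc1, S8.cmt, hcdef.symm]
      rw [he]; exact hc1
    · have hlt : (ψ α c) q < q := lt_of_le_of_ne (not_lt.1 hc1) (hS₂q α hα)
      have he : hh α = (ψ α c)⁻¹ := by
        rw [hh_eq α, show S8.cmt (xg α) (yg α) = c⁻¹ by
          simp only [hxg, hyg, if_neg hc1, S8.cmt]; rw [hcdef]; group, map_inv]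
      rw [he]
      show q < (ψ α c).symm q
      have h2 := (ψ α c).symm.strictMono hlt
      rw [(ψ α c).symm_apply_apply] at h2
      exact h2
  have atomC : ∀ {ζ ξ : I}, ζ ≠ ξ → ∀ u v : S8.H,
      (u = F ζ ∨ u = Gm ζ ∨ u = hh ζ) → (v = F ξ ∨ v = Gm ξ ∨ v = hh ξ) →
      Commute u v := by
    rintro ζ ξ hne u v hu hv
    have hu' : ∃ g : G, u = ψ ζ g := by
      rcases hu with rfl|rfl|rfl
      exacts [⟨xg ζ, rfl⟩, ⟨yg ζ, rfl⟩, ⟨_, hh_eq ζ⟩]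
    have hv' : ∃ g : G, v = ψ ξ g := by
      rcases hv with rfl|rfl|rfl
      exacts [⟨xg ξ, rfl⟩, ⟨yg ξ, rfl⟩, ⟨_, hh_eq ξ⟩]
    obtain ⟨g, rfl⟩ := hu'
    obtain ⟨g', rfl⟩ := hv'
    exact hψcomm hne g g'
  have htag1ex : ∀ α, q < hh α q → ∃ r : ℚ, (r:ℝ) ∈ Jset (hh α) q ∧ hh α q < r :=
    fun α hα => exists_tag hα
  set tag1 : I → ℚ := fun α =>
    if hα : q < hh α q then Classical.choose (htag1ex α hα) else 0 with htag1def
  obtain ⟨r₀, hS₃unc⟩ := exists_uncountable_fiber hS₂unc tag1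
  set S₃ : Set I := {α | α ∈ S₂ ∧ tag1 α = r₀} with hS₃def
  have htag1 : ∀ α ∈ S₃, ((r₀:ℝ) ∈ Jset (hh α) q ∧ hh α q < r₀) := by
    intro α hα
    have hpos := hhpos α hα.1
    have hspec := Classical.choose_spec (htag1ex α hpos)
    have h2 : tag1 α = Classical.choose (htag1ex α hpos) := dif_pos hpos
    have e : Classical.choose (htag1ex α hpos) = r₀ := by rw [← h2, hα.2]
    rwa [e] at hspec
  have hJeq : ∀ α ∈ S₃, ∀ β ∈ S₃, Jset (hh α) q ⊆ Jset (hh β) q := by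
    intro α hα β hβ
    by_cases hne : α = β
    · subst hne; exact subset_rfl
    have hcom : Commute (hh α) (hh β) :=
      atomC hne _ _ (Or.inr (Or.inr rfl)) (Or.inr (Or.inr rfl))
    have hpα := hhpos α hα.1
    have hpβ := hhpos β hβ.1
    rcases nesting hcom hpα hpβ with h | h
    · exact h
    · by_contra hsub
      obtain ⟨x', hx'1, hx'2⟩ := Set.not_subset.1 hsub
      have hj := jump (h₁ := hh β) (h₂ := hh α) hcom.symm hpβ hpα hx'1 hx'2
      exact hj (Jset_star (htag1 β hβ).1
        (mem_uIcc.2 (Or.inl ⟨hpα.le, (htag1 α hα).2.le⟩)))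
  obtain ⟨α₀, hα₀⟩ := uncountable_nonempty hS₃unc
  set T₁ : S8.H := hh α₀ with hT₁def
  have hqT : q < T₁ q := hhpos α₀ hα₀.1
  set J : Set ℝ := Jset T₁ q with hJdef
  have hJ : ∀ α ∈ S₃, Jset (hh α) q = J :=
    fun α hα => Set.Subset.antisymm (hJeq α hα α₀ hα₀) (hJeq α₀ hα₀ α hα)
  have hqJ : q ∈ J := mem_Jset_self (ne_of_gt hqT)
  set S₄ : Set I := S₃ \ {α₀} with hS₄def
  have hS₄unc := uncountable_diff hS₃unc α₀
  have hS₄ne : ∀ α ∈ S₄, α ≠ α₀ := fun α h he => h.2 (Set.mem_singleton_iff.mpr he)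
  have hTcomm : ∀ {α : I}, α ≠ α₀ → ∀ u : S8.H,
      (u = F α ∨ u = Gm α ∨ u = hh α) → Commute T₁ u := by
    intro α hne u hu
    exact (atomC hne u T₁ hu (Or.inr (Or.inr hT₁def))).symm
  have htag2exF : ∀ α, α ≠ α₀ → ∃ r : ℚ, (r:ℝ) ∈ Jset T₁ (F α q) := by
    intro α hne
    have hc1 : Commute T₁ (F α) := hTcomm hne _ (Or.inl rfl)
    have h1 : T₁ (F α q) ≠ F α q := by
      rw [commapp hc1]
      exact fun he => (ne_of_gt hqT) ((F α).injective he)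
    obtain ⟨r, _, hr⟩ := exists_rat_gt_mem (Jset_isOpen T₁ (F α q)) (mem_Jset_self h1)
    exact ⟨r, hr⟩
  have htag2exG : ∀ α, α ≠ α₀ → ∃ r : ℚ, (r:ℝ) ∈ Jset T₁ (Gm α q) := by
    intro α hne
    have hc1 : Commute T₁ (Gm α) := hTcomm hne _ (Or.inr (Or.inl rfl))
    have h1 : T₁ (Gm α q) ≠ Gm α q := by
      rw [commapp hc1]
      exact fun he => (ne_of_gt hqT) ((Gm α).injective he)
    obtain ⟨r, _, hr⟩ := exists_rat_gt_mem (Jset_isOpen T₁ (Gm α q)) (mem_Jset_self h1)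
    exact ⟨r, hr⟩
  set tag2 : I → ℚ × ℚ := fun α =>
    if hα : α ≠ α₀ then (Classical.choose (htag2exF α hα), Classical.choose (htag2exG α hα))
    else (0, 0) with htag2def
  obtain ⟨rs, hS₅unc⟩ := exists_uncountable_fiber hS₄unc tag2
  set S₅ : Set I := {α | α ∈ S₄ ∧ tag2 α = rs} with hS₅def
  have htag2 : ∀ α ∈ S₅, ((rs.1:ℝ) ∈ Jset T₁ (F α q) ∧ (rs.2:ℝ) ∈ Jset T₁ (Gm α q)) := by
    intro α hα
    have hne := hS₄ne α hα.1
    have h2 : tag2 α = (Classical.choose (htag2exF α hne), Classical.choose (htag2exG α hne)) :=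
      dif_pos hne
    rw [hα.2] at h2
    constructor
    · have h3 := Classical.choose_spec (htag2exF α hne)
      have e1 : rs.1 = Classical.choose (htag2exF α hne) := by rw [h2]
      rwa [e1]
    · have h3 := Classical.choose_spec (htag2exG α hne)
      have e2 : rs.2 = Classical.choose (htag2exG α hne) := by rw [h2]
      rwa [e2]
  have hS₅sub : S₅ ⊆ S₄ := fun α h => h.1
  have hS₅S₃ : S₅ ⊆ S₃ := fun α h => h.1.1
  have hblockF : ∀ α ∈ S₅, ∀ β ∈ S₅, ∀ x ∈ J, (F β)⁻¹ ((F α) x) ∈ J := by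
    intro α hα β hβ x hx
    have hcα : Commute T₁ (F α) := hTcomm (hS₄ne α hα.1) _ (Or.inl rfl)
    have hcβ : Commute T₁ (F β) := hTcomm (hS₄ne β hβ.1) _ (Or.inl rfl)
    have h1 : F α x ∈ Jset T₁ (F α q) := Jset_map hcα hx
    have h1' : F α x ∈ Jset T₁ (F β q) := by
      have e1 : Jset T₁ ((rs.1 : ℝ)) = Jset T₁ (F α q) := Jset_trans (htag2 α hα).1
      have e2 : Jset T₁ ((rs.1 : ℝ)) = Jset T₁ (F β q) := Jset_trans (htag2 β hβ).1
      rw [← e1, e2] at h1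
      exact h1
    have h2 : (F β)⁻¹ (F α x) ∈ Jset T₁ ((F β)⁻¹ (F β q)) := Jset_map hcβ.inv_right h1'
    rwa [show (F β)⁻¹ ((F β) q) = q from (F β).symm_apply_apply q] at h2
  have hblockG : ∀ α ∈ S₅, ∀ β ∈ S₅, ∀ x ∈ J, (Gm β)⁻¹ ((Gm α) x) ∈ J := by
    intro α hα β hβ x hx
    have hcα : Commute T₁ (Gm α) := hTcomm (hS₄ne α hα.1) _ (Or.inr (Or.inl rfl))
    have hcβ : Commute T₁ (Gm β) := hTcomm (hS₄ne β hβ.1) _ (Or.inr (Or.inl rfl))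
    have h1 : Gm α x ∈ Jset T₁ (Gm α q) := Jset_map hcα hx
    have h1' : Gm α x ∈ Jset T₁ (Gm β q) := by
      have e1 : Jset T₁ ((rs.2 : ℝ)) = Jset T₁ (Gm α q) := Jset_trans (htag2 α hα).2
      have e2 : Jset T₁ ((rs.2 : ℝ)) = Jset T₁ (Gm β q) := Jset_trans (htag2 β hβ).2
      rw [← e1, e2] at h1
      exact h1
    have h2 : (Gm β)⁻¹ (Gm α x) ∈ Jset T₁ ((Gm β)⁻¹ (Gm β q)) := Jset_map hcβ.inv_right h1'
    rwa [show (Gm β)⁻¹ ((Gm β) q) = q from (Gm β).symm_apply_apply q] at h2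
  have htag3ex : ∀ α, α ∈ S₅ → ∃ N : ℕ, T₁ q < ((hh α)^N) q := by
    intro α hα
    have hpos : q < hh α q := hhpos α (hS₅S₃ hα).1
    have hT₁J : T₁ q ∈ Jset (hh α) q := by
      rw [hJ α (hS₅S₃ hα)]
      exact Jset_map_mem hqT hqJ
    exact orbit_up hpos hT₁J
  set tag3 : I → ℕ := fun α =>
    if hα : α ∈ S₅ then Classical.choose (htag3ex α hα) else 0 with htag3def
  obtain ⟨N₀, hS₆unc⟩ := exists_uncountable_fiber hS₅unc tag3
  set S₆ : Set I := {α | α ∈ S₅ ∧ tag3 α = N₀} with hS₆def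
  have hS₆sub : S₆ ⊆ S₅ := fun α h => h.1
  have htag3 : ∀ α ∈ S₆, T₁ q < ((hh α)^N₀) q := by
    intro α hα
    have hspec := Classical.choose_spec (htag3ex α hα.1)
    have h2 : tag3 α = Classical.choose (htag3ex α hα.1) := dif_pos hα.1
    have e : Classical.choose (htag3ex α hα.1) = N₀ := by rw [← h2, hα.2]
    rwa [e] at hspec
  have hN₀pos : 1 ≤ N₀ := by
    obtain ⟨α, hα⟩ := uncountable_nonempty hS₆unc
    by_contra hcc
    push_neg at hcc
    have h0 : N₀ = 0 := by omega
    have h1 := htag3 α hα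
    rw [h0, pow_zero] at h1
    exact absurd h1 (not_lt.2 (le_of_lt hqT))
  have hS₆inf := uncountable_infinite hS₆unc
  set e := hS₆inf.natEmbedding with hedef
  set idx : ℕ → I := fun m => (e m : I) with hidxdef
  have hidxmem : ∀ m, idx m ∈ S₆ := fun m => (e m).2
  have hidxinj : ∀ {m m' : ℕ}, m ≠ m' → idx m ≠ idx m' :=
    fun hne he => hne (e.injective (Subtype.ext he))
  set n : ℕ := 2*N₀ + 2 with hndef
  set bb : ℕ → I := fun i => idx (3*i) with hbbdef
  set gg : ℕ → I := fun i => idx (3*i+1) with hggdef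
  set dd : ℕ → I := fun i => idx (3*i+2) with hdddef
  have hbbS : ∀ i, bb i ∈ S₆ := fun i => hidxmem _
  have hggS : ∀ i, gg i ∈ S₆ := fun i => hidxmem _
  have hddS : ∀ i, dd i ∈ S₆ := fun i => hidxmem _
  have hne_ggbb : ∀ i j, gg i ≠ bb j := fun i j => hidxinj (by omega)
  have hne_ddbb : ∀ i j, dd i ≠ bb j := fun i j => hidxinj (by omega)
  have hne_ggdd : ∀ i j, gg i ≠ dd j := fun i j => hidxinj (by omega)
  have hne_gggg : ∀ i j, i ≠ j → gg i ≠ gg j := fun i j h => hidxinj (by omega)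
  have hne_dddd : ∀ i j, i ≠ j → dd i ≠ dd j := fun i j h => hidxinj (by omega)
  have hne_bbbb : ∀ i j, i ≠ j → bb i ≠ bb j := fun i j h => hidxinj (by omega)
  have hne_α₀ : ∀ α ∈ S₆, α ≠ α₀ := fun α h => hS₄ne α (hS₅sub (hS₆sub h))
  set A : ℕ → S8.H := fun i => (F (gg i))⁻¹ * F (bb i) with hAdef
  set Bk : ℕ → S8.H := fun i => (Gm (dd i))⁻¹ * Gm (bb i) with hBkdef
  set D : ℕ → S8.H := fun k => ((List.range k).map A).prod with hDdef
  set D' : ℕ → S8.H := fun k => ((List.range k).map Bk).prod with hD'def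
  set P : ℕ → S8.H := fun k => ((List.range k).map (fun i => hh (bb i))).prod with hPdef
  have hDsucc : ∀ k, D (k+1) = D k * A k := by
    intro k
    simp only [hDdef, List.range_succ, List.map_append, List.prod_append,
      List.map_cons, List.map_nil, List.prod_cons, List.prod_nil, mul_one]
  have hD'succ : ∀ k, D' (k+1) = D' k * Bk k := by
    intro k
    simp only [hD'def, List.range_succ, List.map_append, List.prod_append,
      List.map_cons, List.map_nil, List.prod_cons, List.prod_nil, mul_one]
  have hPsucc : ∀ k, P (k+1) = P k * hh (bb k) := by
    intro k
    simp only [hPdef, List.range_succ, List.map_append, List.prod_append,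
      List.map_cons, List.map_nil, List.prod_cons, List.prod_nil, mul_one]
  have hD0 : D 0 = 1 := by simp [hDdef]
  have hD'0 : D' 0 = 1 := by simp [hD'def]
  have hP0 : P 0 = 1 := by simp [hPdef]
  have hAv : ∀ i (ξ : I), ξ ≠ gg i → ξ ≠ bb i → ∀ v : S8.H,
      (v = F ξ ∨ v = Gm ξ ∨ v = hh ξ) → Commute (A i) v := by
    intro i ξ h1 h2 v hv
    exact ((atomC (Ne.symm h1) (F (gg i)) v (Or.inl rfl) hv).inv_left).mul_left
      (atomC (Ne.symm h2) (F (bb i)) v (Or.inl rfl) hv)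
  have hBv : ∀ i (ξ : I), ξ ≠ dd i → ξ ≠ bb i → ∀ v : S8.H,
      (v = F ξ ∨ v = Gm ξ ∨ v = hh ξ) → Commute (Bk i) v := by
    intro i ξ h1 h2 v hv
    exact ((atomC (Ne.symm h1) (Gm (dd i)) v (Or.inr (Or.inl rfl)) hv).inv_left).mul_left
      (atomC (Ne.symm h2) (Gm (bb i)) v (Or.inr (Or.inl rfl)) hv)
  have hAA : ∀ i j, i ≠ j → Commute (A i) (A j) := by
    intro i j hne
    have c1 : Commute (A i) (F (gg j)) :=
      hAv i (gg j) (hne_gggg j i (Ne.symm hne)) (hne_ggbb j i) _ (Or.inl rfl)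
    have c2 : Commute (A i) (F (bb j)) :=
      hAv i (bb j) (Ne.symm (hne_ggbb i j)) (hne_bbbb j i (Ne.symm hne)) _ (Or.inl rfl)
    exact (c1.inv_right).mul_right c2
  have hBB : ∀ i j, i ≠ j → Commute (Bk i) (Bk j) := by
    intro i j hne
    have c1 : Commute (Bk i) (Gm (dd j)) :=
      hBv i (dd j) (hne_dddd j i (Ne.symm hne)) (hne_ddbb j i) _ (Or.inr (Or.inl rfl))
    have c2 : Commute (Bk i) (Gm (bb j)) :=
      hBv i (bb j) (Ne.symm (hne_ddbb i j)) (hne_bbbb j i (Ne.symm hne)) _ (Or.inr (Or.inl rfl))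
    exact (c1.inv_right).mul_right c2
  have hAB : ∀ i j, i ≠ j → Commute (A i) (Bk j) := by
    intro i j hne
    have c1 : Commute (A i) (Gm (dd j)) :=
      hAv i (dd j) (Ne.symm (hne_ggdd i j)) (hne_ddbb j i) _ (Or.inr (Or.inl rfl))
    have c2 : Commute (A i) (Gm (bb j)) :=
      hAv i (bb j) (Ne.symm (hne_ggbb i j)) (hne_bbbb j i (Ne.symm hne)) _ (Or.inr (Or.inl rfl))
    exact (c1.inv_right).mul_right c2
  have hAT : ∀ i, Commute (A i) T₁ :=
    fun i => hAv i α₀ (Ne.symm (hne_α₀ (gg i) (hggS i))) (Ne.symm (hne_α₀ (bb i) (hbbS i)))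
      T₁ (Or.inr (Or.inr hT₁def))
  have hBT : ∀ i, Commute (Bk i) T₁ :=
    fun i => hBv i α₀ (Ne.symm (hne_α₀ (dd i) (hddS i))) (Ne.symm (hne_α₀ (bb i) (hbbS i)))
      T₁ (Or.inr (Or.inr hT₁def))
  have hhT : ∀ i, Commute (hh (bb i)) T₁ :=
    fun i => atomC (hne_α₀ (bb i) (hbbS i)) _ _ (Or.inr (Or.inr rfl)) (Or.inr (Or.inr hT₁def))
  have hDw : ∀ k (w : S8.H), (∀ i, i < k → Commute (A i) w) → Commute (D k) w := by
    intro k w hw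
    refine prodC _ w ?_
    intro u hu
    obtain ⟨i, hi, rfl⟩ := List.mem_map.1 hu
    exact hw i (List.mem_range.1 hi)
  have hD'w : ∀ k (w : S8.H), (∀ i, i < k → Commute (Bk i) w) → Commute (D' k) w := by
    intro k w hw
    refine prodC _ w ?_
    intro u hu
    obtain ⟨i, hi, rfl⟩ := List.mem_map.1 hu
    exact hw i (List.mem_range.1 hi)
  have hPw : ∀ k (w : S8.H), (∀ i, i < k → Commute (hh (bb i)) w) → Commute (P k) w := by
    intro k w hw
    refine prodC _ w ?_
    intro u hu
    obtain ⟨i, hi, rfl⟩ := List.mem_map.1 hu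
    exact hw i (List.mem_range.1 hi)
  have hDA : ∀ k, Commute (D k) (A k) := fun k => hDw k (A k) (fun i hi => hAA i k (by omega))
  have hD'A : ∀ k, Commute (D' k) (A k) :=
    fun k => hD'w k (A k) (fun i hi => (hAB k i (by omega)).symm)
  have hDB : ∀ k, Commute (D k) (Bk k) := fun k => hDw k (Bk k) (fun i hi => hAB i k (by omega))
  have hD'B : ∀ k, Commute (D' k) (Bk k) :=
    fun k => hD'w k (Bk k) (fun i hi => hBB i k (by omega))
  have hDT : ∀ k, Commute T₁ (D k) := fun k => (hDw k T₁ (fun i _ => hAT i)).symm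
  have hD'T : ∀ k, Commute T₁ (D' k) := fun k => (hD'w k T₁ (fun i _ => hBT i)).symm
  have hPT : ∀ k, Commute T₁ (P k) := fun k => (hPw k T₁ (fun i _ => hhT i)).symm
  have hABc : ∀ k, S8.cmt (A k) (Bk k) = hh (bb k) := by
    intro k
    have h21 : Commute (F (bb k)) ((Gm (dd k))⁻¹) :=
      (atomC (Ne.symm (hne_ddbb k k)) _ _ (Or.inl rfl) (Or.inr (Or.inl rfl))).inv_right
    have h12 : Commute ((F (gg k))⁻¹) (F (bb k)) :=
      (atomC (hne_ggbb k k) _ _ (Or.inl rfl) (Or.inl rfl)).inv_left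
    have h1b2 : Commute ((F (gg k))⁻¹) (Gm (bb k)) :=
      (atomC (hne_ggbb k k) _ _ (Or.inl rfl) (Or.inr (Or.inl rfl))).inv_left
    have hb12 : Commute ((Gm (dd k))⁻¹) (Gm (bb k)) :=
      (atomC (hne_ddbb k k) _ _ (Or.inr (Or.inl rfl)) (Or.inr (Or.inl rfl))).inv_left
    show S8.cmt ((F (gg k))⁻¹ * F (bb k)) ((Gm (dd k))⁻¹ * Gm (bb k)) = hh (bb k)
    rw [S8.cmt_mul_mul h21 h12 h1b2 hb12]
    have hz : S8.cmt ((F (gg k))⁻¹) ((Gm (dd k))⁻¹) = 1 :=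
      S8.cmt_eq_one ((atomC (hne_ggdd k k) _ _ (Or.inl rfl)
        (Or.inr (Or.inl rfl))).inv_left.inv_right)
    rw [hz, one_mul]
  have hmain : ∀ k, S8.cmt (D k) (D' k) = P k := by
    intro k
    induction k with
    | zero => rw [hD0, hD'0, hP0]; exact S8.cmt_one_one
    | succ k ih =>
      rw [hDsucc, hD'succ, hPsucc,
        S8.cmt_mul_mul ((hD'A k).symm) (hDA k) (hDB k) (hD'B k), ih, hABc k]
  have hDJ : ∀ k, ∀ x ∈ J, (D k) x ∈ J := by
    intro k
    induction k with
    | zero =>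
      intro x hx
      rw [hD0]
      exact hx
    | succ k ih =>
      intro x hx
      rw [hDsucc]
      show (D k) ((A k) x) ∈ J
      apply ih
      show (F (gg k))⁻¹ ((F (bb k)) x) ∈ J
      exact hblockF (bb k) (hS₆sub (hbbS k)) (gg k) (hS₆sub (hggS k)) x hx
  have hD'J : ∀ k, ∀ x ∈ J, (D' k) x ∈ J := by
    intro k
    induction k with
    | zero =>
      intro x hx
      rw [hD'0]
      exact hx
    | succ k ih =>
      intro x hx
      rw [hD'succ]
      show (D' k) ((Bk k) x) ∈ J
      apply ih
      show (Gm (dd k))⁻¹ ((Gm (bb k)) x) ∈ J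
      exact hblockG (bb k) (hS₆sub (hbbS k)) (dd k) (hS₆sub (hddS k)) x hx
  have hPh : ∀ k, Commute (P k) (hh (bb k)) :=
    fun k => hPw k _ (fun i hi => atomC (hne_bbbb i k (by omega)) _ _
      (Or.inr (Or.inr rfl)) (Or.inr (Or.inr rfl)))
  have hlow : ∀ k, ((T₁^k)) q ≤ ((P k)^N₀) q := by
    intro k
    induction k with
    | zero =>
      rw [hP0, one_pow, pow_zero]
    | succ k ih =>
      rw [hPsucc, (hPh k).mul_pow]
      show (T₁^(k+1)) q ≤ ((P k)^N₀) (((hh (bb k))^N₀) q)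
      have h2 : T₁ q < ((hh (bb k))^N₀) q := htag3 (bb k) (hbbS k)
      calc (T₁^(k+1)) q = T₁ ((T₁^k) q) := pow_apply_succ T₁ k q
      _ ≤ T₁ (((P k)^N₀) q) := T₁.monotone ih
      _ = ((P k)^N₀) (T₁ q) := commapp ((hPT k).pow_right N₀) q
      _ ≤ ((P k)^N₀) (((hh (bb k))^N₀) q) := ((P k)^N₀).monotone h2.le
  have hDq : (D n) q ∈ J := hDJ n q hqJ
  have hD'q : (D' n) q ∈ J := hD'J n q hqJ
  obtain ⟨ae, ha1, ha2⟩ := sandwich hqT hDq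
  obtain ⟨be, hb1, hb2⟩ := sandwich hqT hD'q
  have hcTD : Commute T₁ (D n) := hDT n
  have hcTD' : Commute T₁ (D' n) := hD'T n
  have hzD : ∀ (m : ℤ) (x : ℝ), (D n) ((T₁^m) x) = (T₁^m) ((D n) x) :=
    fun m x => commapp ((hcTD.symm).zpow_right m) x
  have hzD' : ∀ (m : ℤ) (x : ℝ), (D' n) ((T₁^m) x) = (T₁^m) ((D' n) x) :=
    fun m x => commapp ((hcTD'.symm).zpow_right m) x
  have hzDi : ∀ (m : ℤ) (x : ℝ), (D n)⁻¹ ((T₁^m) x) = (T₁^m) ((D n)⁻¹ x) :=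
    fun m x => commapp (((hcTD.symm).inv_left).zpow_right m) x
  have hzz : ∀ (m m' : ℤ) (x : ℝ), (T₁^m) ((T₁^m') x) = (T₁^(m+m')) x := by
    intro m m' x
    rw [zpow_add]
    rfl
  have hstep1 : (D' n)⁻¹ q ≤ (T₁^(-be)) q := by
    apply inv_le_of_le
    rw [hzD' (-be) q]
    have h5 : (T₁^(-be)) ((T₁^be) q) ≤ (T₁^(-be)) ((D' n) q) := (T₁^(-be)).monotone hb1
    rw [hzz (-be) be q] at h5
    rw [show -be + be = (0:ℤ) by ring, zpow_zero] at h5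
    exact h5
  have hstep1' : (D n)⁻¹ q ≤ (T₁^(-ae)) q := by
    apply inv_le_of_le
    rw [hzD (-ae) q]
    have h5 : (T₁^(-ae)) ((T₁^ae) q) ≤ (T₁^(-ae)) ((D n) q) := (T₁^(-ae)).monotone ha1
    rw [hzz (-ae) ae q] at h5
    rw [show -ae + ae = (0:ℤ) by ring, zpow_zero] at h5
    exact h5
  have hstep2 : (D n)⁻¹ ((D' n)⁻¹ q) ≤ (T₁^(-be + -ae)) q := by
    have h5 : (D n)⁻¹ ((D' n)⁻¹ q) ≤ (D n)⁻¹ ((T₁^(-be)) q) := ((D n)⁻¹).monotone hstep1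
    rw [hzDi (-be) q] at h5
    have h6 : (T₁^(-be)) ((D n)⁻¹ q) ≤ (T₁^(-be)) ((T₁^(-ae)) q) := (T₁^(-be)).monotone hstep1'
    rw [hzz (-be) (-ae) q] at h6
    exact le_trans h5 h6
  have hstep3 : (D' n) ((D n)⁻¹ ((D' n)⁻¹ q)) < (T₁^(1 - ae)) q := by
    have h5 : (D' n) ((D n)⁻¹ ((D' n)⁻¹ q)) ≤ (D' n) ((T₁^(-be + -ae)) q) :=
      (D' n).monotone hstep2
    rw [hzD' (-be + -ae) q] at h5
    have h6 : (T₁^(-be + -ae)) ((D' n) q) < (T₁^(-be + -ae)) ((T₁^(be+1)) q) :=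
      (T₁^(-be + -ae)).strictMono hb2
    rw [hzz (-be + -ae) (be+1) q, show (-be + -ae) + (be+1) = 1 - ae by ring] at h6
    exact lt_of_le_of_lt h5 h6
  have hstep4 : (S8.cmt (D n) (D' n)) q < (T₁^(2:ℤ)) q := by
    show (D n) ((D' n) ((D n)⁻¹ ((D' n)⁻¹ q))) < (T₁^(2:ℤ)) q
    have h5 : (D n) ((D' n) ((D n)⁻¹ ((D' n)⁻¹ q))) < (D n) ((T₁^(1 - ae)) q) :=
      (D n).strictMono hstep3
    rw [hzD (1-ae) q] at h5
    have h6 : (T₁^(1-ae)) ((D n) q) < (T₁^(1-ae)) ((T₁^(ae+1)) q) :=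
      (T₁^(1-ae)).strictMono ha2
    rw [hzz (1-ae) (ae+1) q, show (1-ae) + (ae+1) = (2:ℤ) by ring] at h6
    exact lt_trans h5 h6
  have hcTR : Commute T₁ (S8.cmt (D n) (D' n)) := by
    show Commute T₁ ((D n) * (D' n) * (D n)⁻¹ * (D' n)⁻¹)
    exact ((hcTD.mul_right hcTD').mul_right hcTD.inv_right).mul_right hcTD'.inv_right
  have hRpow : ∀ j : ℕ, 1 ≤ j → ((S8.cmt (D n) (D' n))^j) q < (T₁^(2*(j:ℤ))) q := by
    intro j hj
    induction j with
    | zero => omega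
    | succ k ih =>
      rcases Nat.lt_or_ge 1 (k+1) with h0 | h0
      · have hk : 1 ≤ k := by omega
        have ih' := ih hk
        have h5 : ((S8.cmt (D n) (D' n))^(k+1)) q
            = (S8.cmt (D n) (D' n)) (((S8.cmt (D n) (D' n))^k) q) :=
          pow_apply_succ (S8.cmt (D n) (D' n)) k q
        rw [h5]
        have h6 := (S8.cmt (D n) (D' n)).strictMono ih'
        have h7 : (S8.cmt (D n) (D' n)) ((T₁^(2*(k:ℤ))) q)
            = (T₁^(2*(k:ℤ))) ((S8.cmt (D n) (D' n)) q) :=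
          commapp ((hcTR.symm).zpow_right _) q
        rw [h7] at h6
        have h8 : (T₁^(2*(k:ℤ))) ((S8.cmt (D n) (D' n)) q)
            < (T₁^(2*(k:ℤ))) ((T₁^(2:ℤ)) q) := (T₁^(2*(k:ℤ))).strictMono hstep4
        rw [hzz (2*(k:ℤ)) 2 q, show (2*(k:ℤ)) + 2 = 2*((k:ℤ)+1) by ring] at h8
        have h9 : (2*((k:ℤ)+1)) = 2*(((k+1:ℕ)):ℤ) := by push_cast; ring
        rw [h9] at h8
        exact lt_trans h6 h8
      · have hk : k = 0 := by omega
        subst hk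
        rw [pow_one]
        have h9 : (2*(((1:ℕ)):ℤ)) = (2:ℤ) := by norm_num
        rw [h9]
        exact hstep4
  have hfin2 : ((P n)^N₀) q < (T₁^(2*(N₀:ℤ))) q := by
    rw [← hmain n]
    exact hRpow N₀ hN₀pos
  have hfin3 : (T₁^((n:ℤ))) q < (T₁^(2*(N₀:ℤ))) q := by
    have h5 : (T₁^((n:ℤ))) q = (T₁^(n:ℕ)) q := by rw [zpow_natCast]
    rw [h5]
    exact lt_of_le_of_lt (hlow n) hfin2
  have hfin4 : ((n:ℕ):ℤ) < 2*(N₀:ℤ) := (zpow_strict hqT).lt_iff_lt.mp hfin3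
  rw [hndef] at hfin4
  push_cast at hfin4
  omega
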